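/- Let X_u, X_v, and X'_u be mutually independent random variables, with X'_u having the same distribution as X_u (an independent 'replicate' of the model-form-uncertainty group). Let f be a measurable function of the two groups such that f(X_u, X_v) is square-integrable. Then E[ f(X_u, X_v) · f(X'_u, X_v) ] = E[ (E[ f(X_u, X_v) | X_v ])² ]. -/

import Mathlib

open MeasureTheory ProbabilityTheory

private lemma l2_mul_integrable {α : Type*} [MeasurableSpace α] {μ : Measure α}
    {f g : α → ℝ} (hf : MemLp f 2 μ) (hg : MemLp g 2 μ) :
    Integrable (fun x => f x * g x) μ := by
  have h : MemLp (g • f) 1 μ := by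
    exact hf.smul hg
  have h' := memLp_one_iff_integrable.mp h
  convert h' using 1
  funext x
  simp [Pi.smul_apply, smul_eq_mul, mul_comm]

private lemma sq_integral_le' {α : Type*} [MeasurableSpace α] {μ : Measure α}
    [IsProbabilityMeasure μ] {X : α → ℝ} (hX : MemLp X 2 μ) :
    (∫ x, X x ∂μ) ^ 2 ≤ ∫ x, X x ^ 2 ∂μ := by
  have h := variance_nonneg X μ
  rw [variance_eq_sub hX] at h
  have h2 : (0:ℝ) ≤ (∫ x, X x ^ 2 ∂μ) - (∫ x, X x ∂μ) ^ 2 := by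
    simpa [Pi.pow_apply] using h
  linarith

/-- **Pick-freeze identity for the second moment of the conditional expectation.**
Let `X_u, X_v, X'_u` be mutually independent (encoded as `X_u ⊥ X_v` together with
`(X_u, X_v) ⊥ X'_u`), with `X'_u` distributed as `X_u`.  Then
`E[ f(X_u, X_v) · f(X'_u, X_v) ] = E[ (E[ f(X_u, X_v) | X_v ])² ]`. -/
theorem pick_freeze_second_moment
    {Ω U V : Type*} [MeasurableSpace Ω] [MeasurableSpace U] [MeasurableSpace V]
    {μ : Measure Ω} [IsProbabilityMeasure μ]
    (Xu Xu' : Ω → U) (Xv : Ω → V)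
    (hXu : Measurable Xu) (hXu' : Measurable Xu') (hXv : Measurable Xv)
    -- mutual independence of `X_u`, `X_v`, `X'_u`:
    (hUV : IndepFun Xu Xv μ)
    (hUVU' : IndepFun (fun ω => (Xu ω, Xv ω)) Xu' μ)
    -- `X'_u` is a replicate of `X_u`:
    (hid : IdentDistrib Xu' Xu μ μ)
    (f : U × V → ℝ) (hf : Measurable f)
    (hL2 : MemLp (fun ω => f (Xu ω, Xv ω)) 2 μ) :
    ∫ ω, f (Xu ω, Xv ω) * f (Xu' ω, Xv ω) ∂μ
      = ∫ ω, ((μ[fun ω' => f (Xu ω', Xv ω')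
          | MeasurableSpace.comap Xv inferInstance]) ω) ^ 2 ∂μ := by
  have hpair : Measurable fun ω => (Xu ω, Xv ω) := hXu.prodMk hXv
  set κ : Measure U := Measure.map Xu μ with hκdef
  set ν : Measure V := Measure.map Xv μ with hνdef
  haveI : IsProbabilityMeasure κ := Measure.isProbabilityMeasure_map hXu.aemeasurable
  haveI : IsProbabilityMeasure ν := Measure.isProbabilityMeasure_map hXv.aemeasurable
  have hπ : Measure.map (fun ω => (Xu ω, Xv ω)) μ = κ.prod ν :=
    (indepFun_iff_map_prod_eq_prod_map_map hXu.aemeasurable hXv.aemeasurable).mp hUV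
  have hfL2 : MemLp f 2 (κ.prod ν) := by
    rw [← hπ]
    exact (memLp_map_measure_iff hf.aestronglyMeasurable hpair.aemeasurable).mpr hL2
  have hfInt : Integrable f (κ.prod ν) := hfL2.integrable one_le_two
  set g : V → ℝ := fun v => ∫ u, f (u, v) ∂κ with hgdef
  have hgsm : StronglyMeasurable g := hf.stronglyMeasurable.integral_prod_left'
  have hgInt : Integrable g ν := hfInt.integral_prod_right
  -- `g` is in L²(ν)
  have hsq_int : Integrable (fun p => f p ^ 2) (κ.prod ν) := hfL2.integrable_sq
  have hInt2 : Integrable (fun v => ∫ u, f (u, v) ^ 2 ∂κ) ν := hsq_int.integral_prod_right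
  have hslice : ∀ᵐ v ∂ν, Integrable (fun u => f (u, v) ^ 2) κ := hsq_int.prod_left_ae
  have hbound : ∀ᵐ v ∂ν, ‖g v ^ 2‖ ≤ ‖∫ u, f (u, v) ^ 2 ∂κ‖ := by
    filter_upwards [hslice] with v hv
    have hXmem : MemLp (fun u => f (u, v)) 2 κ :=
      (memLp_two_iff_integrable_sq
        ((hf.comp measurable_prodMk_right).aestronglyMeasurable)).mpr hv
    have h1 : (∫ u, f (u, v) ∂κ) ^ 2 ≤ ∫ u, f (u, v) ^ 2 ∂κ := sq_integral_le' hXmem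
    have h0 : (0:ℝ) ≤ ∫ u, f (u, v) ^ 2 ∂κ := integral_nonneg fun u => sq_nonneg _
    rw [Real.norm_eq_abs, Real.norm_eq_abs, abs_of_nonneg (sq_nonneg _), abs_of_nonneg h0]
    exact h1
  have hg2Int : Integrable (fun v => g v ^ 2) ν :=
    Integrable.mono hInt2 (hgsm.measurable.pow_const 2).aestronglyMeasurable hbound
  have hgL2 : MemLp g 2 ν := (memLp_two_iff_integrable_sq hgsm.aestronglyMeasurable).mpr hg2Int
  -- the conditional expectation is `g ∘ Xv`
  have hm : MeasurableSpace.comap Xv inferInstance ≤ (inferInstance : MeasurableSpace Ω) :=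
    hXv.comap_le
  have hFint : Integrable (fun ω => f (Xu ω, Xv ω)) μ := hL2.integrable one_le_two
  have hgXv_meas : Measurable[MeasurableSpace.comap Xv inferInstance] fun ω => g (Xv ω) :=
    hgsm.measurable.comp (Measurable.of_comap_le le_rfl)
  have hgXv_int : Integrable (fun ω => g (Xv ω)) μ :=
    (integrable_map_measure hgsm.aestronglyMeasurable hXv.aemeasurable).mp hgInt
  have hg_eq : ∀ s, MeasurableSet[MeasurableSpace.comap Xv inferInstance] s → μ s < ⊤ →
      ∫ ω in s, g (Xv ω) ∂μ = ∫ ω in s, f (Xu ω, Xv ω) ∂μ := by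
    rintro s ⟨t, ht, rfl⟩ -
    have hpre : Xv ⁻¹' t = (fun ω => (Xu ω, Xv ω)) ⁻¹' (Set.univ ×ˢ t) := by
      ext ω; simp
    have h1 : ∫ ω in Xv ⁻¹' t, g (Xv ω) ∂μ = ∫ v in t, g v ∂ν :=
      (setIntegral_map ht hgsm.aestronglyMeasurable hXv.aemeasurable).symm
    have hri : Integrable f (κ.prod (ν.restrict t)) := by
      have h' := hfInt.restrict (s := Set.univ ×ˢ t)
      rwa [← Measure.prod_restrict, Measure.restrict_univ] at h'
    have h2 : ∫ ω in Xv ⁻¹' t, f (Xu ω, Xv ω) ∂μ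
        = ∫ p in Set.univ ×ˢ t, f p ∂(κ.prod ν) := by
      rw [hpre, ← hπ]
      exact (setIntegral_map (MeasurableSet.univ.prod ht) hf.aestronglyMeasurable
        hpair.aemeasurable).symm
    have h3 : ∫ p in Set.univ ×ˢ t, f p ∂(κ.prod ν) = ∫ v in t, g v ∂ν := by
      calc ∫ p in Set.univ ×ˢ t, f p ∂(κ.prod ν)
          = ∫ p, f p ∂(κ.prod (ν.restrict t)) := by
            rw [← Measure.prod_restrict, Measure.restrict_univ]
        _ = ∫ v, (∫ u, f (u, v) ∂κ) ∂(ν.restrict t) := integral_prod_symm f hri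
        _ = ∫ v in t, g v ∂ν := rfl
    rw [h1, h2, h3]
  have hgm : AEStronglyMeasurable[MeasurableSpace.comap Xv inferInstance]
      (fun ω => g (Xv ω)) μ :=
    StronglyMeasurable.aestronglyMeasurable hgXv_meas.stronglyMeasurable
  have hcond : (fun ω => g (Xv ω)) =ᵐ[μ]
      μ[fun ω' => f (Xu ω', Xv ω') | MeasurableSpace.comap Xv inferInstance] :=
    ae_eq_condExp_of_forall_setIntegral_eq hm hFint (fun s _ _ => hgXv_int.integrableOn)
      hg_eq hgm
  -- right-hand side
  have hRHS : ∫ ω, ((μ[fun ω' => f (Xu ω', Xv ω')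
        | MeasurableSpace.comap Xv inferInstance]) ω) ^ 2 ∂μ = ∫ v, g v ^ 2 ∂ν := by
    have h1 : ∫ ω, ((μ[fun ω' => f (Xu ω', Xv ω')
          | MeasurableSpace.comap Xv inferInstance]) ω) ^ 2 ∂μ
        = ∫ ω, g (Xv ω) ^ 2 ∂μ :=
      integral_congr_ae (hcond.symm.mono fun ω hω => by dsimp only at hω ⊢; rw [hω])
    rw [h1, hνdef]
    exact (integral_map hXv.aemeasurable
      (hgsm.measurable.pow_const 2).aestronglyMeasurable).symm
  -- left-hand side
  have hT : Measurable fun ω => ((Xu ω, Xv ω), Xu' ω) := hpair.prodMk hXu'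
  have hmapT : Measure.map (fun ω => ((Xu ω, Xv ω), Xu' ω)) μ = (κ.prod ν).prod κ := by
    rw [(indepFun_iff_map_prod_eq_prod_map_map hpair.aemeasurable hXu'.aemeasurable).mp hUVU',
      hπ, hid.map_eq]
  have hhmeas : Measurable fun q : (U × V) × U => f q.1 * f (q.2, q.1.2) :=
    (hf.comp measurable_fst).mul (hf.comp (measurable_snd.prodMk measurable_fst.snd))
  have mp_fst : MeasurePreserving (Prod.fst) ((κ.prod ν).prod κ) (κ.prod ν) :=
    ⟨measurable_fst, by simp⟩
  have mp_phi : MeasurePreserving (fun q : (U × V) × U => (q.2, q.1.2))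
      ((κ.prod ν).prod κ) (κ.prod ν) := by
    have h1 : MeasurePreserving Prod.swap ((κ.prod ν).prod κ) (κ.prod (κ.prod ν)) :=
      Measure.measurePreserving_swap
    have h2 : MeasurePreserving (Prod.map (id : U → U) (Prod.snd : U × V → V))
        (κ.prod (κ.prod ν)) (κ.prod ν) :=
      (MeasurePreserving.id κ).prod ⟨measurable_snd, by simp⟩
    exact h2.comp h1
  have h1L2 : MemLp (fun q : (U × V) × U => f q.1) 2 ((κ.prod ν).prod κ) :=
    hfL2.comp_measurePreserving mp_fst
  have h2L2 : MemLp (fun q : (U × V) × U => f (q.2, q.1.2)) 2 ((κ.prod ν).prod κ) :=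
    hfL2.comp_measurePreserving mp_phi
  have hhInt : Integrable (fun q : (U × V) × U => f q.1 * f (q.2, q.1.2))
      ((κ.prod ν).prod κ) := l2_mul_integrable h1L2 h2L2
  have hLHS1 : ∫ ω, f (Xu ω, Xv ω) * f (Xu' ω, Xv ω) ∂μ
      = ∫ q : (U × V) × U, f q.1 * f (q.2, q.1.2) ∂((κ.prod ν).prod κ) := by
    rw [← hmapT, integral_map hT.aemeasurable hhmeas.aestronglyMeasurable]
  have hLHS2 : ∫ q : (U × V) × U, f q.1 * f (q.2, q.1.2) ∂((κ.prod ν).prod κ)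
      = ∫ p, f p * g p.2 ∂(κ.prod ν) := by
    rw [integral_prod _ hhInt]
    refine integral_congr_ae (Filter.Eventually.of_forall fun p => ?_)
    dsimp only
    rw [integral_const_mul]
  have hmulL2' : MemLp (fun p : U × V => g p.2) 2 (κ.prod ν) :=
    hgL2.comp_measurePreserving ⟨measurable_snd, by simp⟩
  have hInt3 : Integrable (fun p : U × V => f p * g p.2) (κ.prod ν) :=
    l2_mul_integrable hfL2 hmulL2'
  have hLHS3 : ∫ p, f p * g p.2 ∂(κ.prod ν) = ∫ v, g v ^ 2 ∂ν := by
    rw [integral_prod_symm _ hInt3]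
    refine integral_congr_ae (Filter.Eventually.of_forall fun v => ?_)
    dsimp only
    rw [integral_mul_const, sq]
  rw [hLHS1, hLHS2, hLHS3, hRHS]
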